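/- The direct sum of two Rayleigh matroids is Rayleigh. -/

import Mathlib

open Finset

def genPoly {α : Type*} [DecidableEq α] (Bs : Finset (Finset α)) (I J : Finset α)
    (a : α → ℝ) : ℝ :=
  ∑ B ∈ Bs.filter (fun B => I ⊆ B ∧ Disjoint J B), ∏ i ∈ B, a i

def IsRayleigh {α : Type*} [DecidableEq α] (Bs : Finset (Finset α)) : Prop :=
  ∀ e f : α, e ≠ f → ∀ a : α → ℝ, (∀ i, 0 ≤ a i) →
    genPoly Bs {e, f} ∅ a * genPoly Bs ∅ {e, f} a ≤
      genPoly Bs {e} {f} a * genPoly Bs {f} {e} a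

def IsMatroidBases {α : Type*} [DecidableEq α] (Bs : Finset (Finset α)) : Prop :=
  Bs.Nonempty ∧
    ∀ B₁ ∈ Bs, ∀ B₂ ∈ Bs, ∀ x ∈ B₁ \ B₂, ∃ y ∈ B₂ \ B₁, insert y (B₁.erase x) ∈ Bs

lemma subset_disjSum_iff {α β : Type*} [DecidableEq α] [DecidableEq β]
    {I : Finset (α ⊕ β)} {s : Finset α} {t : Finset β} :
    I ⊆ s.disjSum t ↔ I.toLeft ⊆ s ∧ I.toRight ⊆ t := by
  constructor
  · intro h
    exact ⟨by simpa using toLeft_subset_toLeft h, by simpa using toRight_subset_toRight h⟩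
  · rintro ⟨h1, h2⟩ (x | x) hx
    · exact inl_mem_disjSum.2 (h1 (by simpa using hx))
    · exact inr_mem_disjSum.2 (h2 (by simpa using hx))

lemma disjoint_disjSum_iff {α β : Type*} [DecidableEq α] [DecidableEq β]
    {J : Finset (α ⊕ β)} {s : Finset α} {t : Finset β} :
    Disjoint J (s.disjSum t) ↔ Disjoint J.toLeft s ∧ Disjoint J.toRight t := by
  simp only [disjoint_left, mem_toLeft, mem_toRight, mem_disjSum]
  constructor
  · intro h
    exact ⟨fun {x} hx hs => h hx (Or.inl ⟨x, hs, rfl⟩),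
           fun {x} hx ht => h hx (Or.inr ⟨x, ht, rfl⟩)⟩
  · rintro ⟨h1, h2⟩ (x | x) hx (⟨y, hy, hxy⟩ | ⟨y, hy, hxy⟩) <;>
      first
      | (cases hxy; exact h1 hx hy)
      | (cases hxy; exact h2 hx hy)
      | exact absurd hxy (by simp)

lemma genPoly_nonneg {α : Type*} [DecidableEq α] (Bs : Finset (Finset α)) (I J : Finset α)
    (a : α → ℝ) (ha : ∀ i, 0 ≤ a i) : 0 ≤ genPoly Bs I J a :=
  Finset.sum_nonneg fun B _ => Finset.prod_nonneg fun i _ => ha i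

lemma genPoly_directSum {m n : ℕ}
    (Bs₁ : Finset (Finset (Fin m))) (Bs₂ : Finset (Finset (Fin n)))
    (I J : Finset (Fin m ⊕ Fin n)) (a : Fin m ⊕ Fin n → ℝ) :
    genPoly ((Bs₁ ×ˢ Bs₂).image (fun p => p.1.disjSum p.2)) I J a =
      genPoly Bs₁ I.toLeft J.toLeft (fun x => a (Sum.inl x)) *
        genPoly Bs₂ I.toRight J.toRight (fun x => a (Sum.inr x)) := by
  unfold genPoly
  rw [Finset.filter_image, Finset.sum_image]
  · have : ((Bs₁ ×ˢ Bs₂).filter fun p =>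
        I ⊆ p.1.disjSum p.2 ∧ Disjoint J (p.1.disjSum p.2)) =
      (Bs₁.filter fun B => I.toLeft ⊆ B ∧ Disjoint J.toLeft B) ×ˢ
        (Bs₂.filter fun B => I.toRight ⊆ B ∧ Disjoint J.toRight B) := by
      ext p
      simp only [Finset.mem_filter, Finset.mem_product, subset_disjSum_iff,
        disjoint_disjSum_iff]
      tauto
    rw [this, Finset.sum_product, Finset.sum_mul_sum]
    exact Finset.sum_congr rfl fun B₁ _ => Finset.sum_congr rfl fun B₂ _ => by
      rw [Finset.prod_disjSum]
  · intro p _ q _ h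
    have := Finset.Injective2_disjSum h
    exact Prod.ext this.1 this.2

@[simp] lemma toLeft_empty' {α β : Type*} [DecidableEq α] [DecidableEq β] :
    (∅ : Finset (α ⊕ β)).toLeft = ∅ := by ext x; simp

@[simp] lemma toRight_empty' {α β : Type*} [DecidableEq α] [DecidableEq β] :
    (∅ : Finset (α ⊕ β)).toRight = ∅ := by ext x; simp

@[simp] lemma toLeft_singleton_inl {α β : Type*} [DecidableEq α] [DecidableEq β] (a : α) :
    ({Sum.inl a} : Finset (α ⊕ β)).toLeft = {a} := by ext x; simp

@[simp] lemma toLeft_singleton_inr {α β : Type*} [DecidableEq α] [DecidableEq β] (b : β) :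
    ({Sum.inr b} : Finset (α ⊕ β)).toLeft = ∅ := by ext x; simp

@[simp] lemma toRight_singleton_inl {α β : Type*} [DecidableEq α] [DecidableEq β] (a : α) :
    ({Sum.inl a} : Finset (α ⊕ β)).toRight = ∅ := by ext x; simp

@[simp] lemma toRight_singleton_inr {α β : Type*} [DecidableEq α] [DecidableEq β] (b : β) :
    ({Sum.inr b} : Finset (α ⊕ β)).toRight = {b} := by ext x; simp

theorem directSum_rayleigh (m n : ℕ)
    (Bs₁ : Finset (Finset (Fin m))) (Bs₂ : Finset (Finset (Fin n)))
    (hM₁ : IsMatroidBases Bs₁) (hM₂ : IsMatroidBases Bs₂)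
    (hR₁ : IsRayleigh Bs₁) (hR₂ : IsRayleigh Bs₂) :
    IsRayleigh ((Bs₁ ×ˢ Bs₂).image (fun p => p.1.disjSum p.2)) := by
  rintro (e | e) (f | f) hef a ha
  · have hef' : e ≠ f := fun h => hef (by rw [h])
    simp only [genPoly_directSum, Finset.toLeft_insert_inl, Finset.toLeft_insert_inr,
      Finset.toRight_insert_inl, Finset.toRight_insert_inr, toLeft_empty', toRight_empty',
      toLeft_singleton_inl, toLeft_singleton_inr, toRight_singleton_inl, toRight_singleton_inr, Finset.insert_empty]
    have key := hR₁ e f hef' (fun x => a (Sum.inl x)) (fun i => ha _)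
    have h2 := genPoly_nonneg Bs₂ ∅ ∅ (fun x => a (Sum.inr x)) (fun i => ha _)
    calc genPoly Bs₁ {e, f} ∅ (fun x => a (Sum.inl x)) *
          genPoly Bs₂ ∅ ∅ (fun x => a (Sum.inr x)) *
          (genPoly Bs₁ ∅ {e, f} (fun x => a (Sum.inl x)) *
            genPoly Bs₂ ∅ ∅ (fun x => a (Sum.inr x)))
        = genPoly Bs₁ {e, f} ∅ (fun x => a (Sum.inl x)) *
            genPoly Bs₁ ∅ {e, f} (fun x => a (Sum.inl x)) *
            (genPoly Bs₂ ∅ ∅ (fun x => a (Sum.inr x)) *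
              genPoly Bs₂ ∅ ∅ (fun x => a (Sum.inr x))) := by ring
      _ ≤ genPoly Bs₁ {e} {f} (fun x => a (Sum.inl x)) *
            genPoly Bs₁ {f} {e} (fun x => a (Sum.inl x)) *
            (genPoly Bs₂ ∅ ∅ (fun x => a (Sum.inr x)) *
              genPoly Bs₂ ∅ ∅ (fun x => a (Sum.inr x))) :=
          mul_le_mul_of_nonneg_right key (mul_nonneg h2 h2)
      _ = _ := by ring
  · simp only [genPoly_directSum, Finset.toLeft_insert_inl, Finset.toLeft_insert_inr,
      Finset.toRight_insert_inl, Finset.toRight_insert_inr, toLeft_empty', toRight_empty',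
      toLeft_singleton_inl, toLeft_singleton_inr, toRight_singleton_inl, toRight_singleton_inr, Finset.insert_empty]
    exact le_of_eq (by ring)
  · simp only [genPoly_directSum, Finset.toLeft_insert_inl, Finset.toLeft_insert_inr,
      Finset.toRight_insert_inl, Finset.toRight_insert_inr, toLeft_empty', toRight_empty',
      toLeft_singleton_inl, toLeft_singleton_inr, toRight_singleton_inl, toRight_singleton_inr, Finset.insert_empty]
    exact le_of_eq (by ring)
  · have hef' : e ≠ f := fun h => hef (by rw [h])
    simp only [genPoly_directSum, Finset.toLeft_insert_inl, Finset.toLeft_insert_inr,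
      Finset.toRight_insert_inl, Finset.toRight_insert_inr, toLeft_empty', toRight_empty',
      toLeft_singleton_inl, toLeft_singleton_inr, toRight_singleton_inl, toRight_singleton_inr, Finset.insert_empty]
    have key := hR₂ e f hef' (fun x => a (Sum.inr x)) (fun i => ha _)
    have h1 := genPoly_nonneg Bs₁ ∅ ∅ (fun x => a (Sum.inl x)) (fun i => ha _)
    calc genPoly Bs₁ ∅ ∅ (fun x => a (Sum.inl x)) *
          genPoly Bs₂ {e, f} ∅ (fun x => a (Sum.inr x)) *
          (genPoly Bs₁ ∅ ∅ (fun x => a (Sum.inl x)) *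
            genPoly Bs₂ ∅ {e, f} (fun x => a (Sum.inr x)))
        = genPoly Bs₂ {e, f} ∅ (fun x => a (Sum.inr x)) *
            genPoly Bs₂ ∅ {e, f} (fun x => a (Sum.inr x)) *
            (genPoly Bs₁ ∅ ∅ (fun x => a (Sum.inl x)) *
              genPoly Bs₁ ∅ ∅ (fun x => a (Sum.inl x))) := by ring
      _ ≤ genPoly Bs₂ {e} {f} (fun x => a (Sum.inr x)) *
            genPoly Bs₂ {f} {e} (fun x => a (Sum.inr x)) *
            (genPoly Bs₁ ∅ ∅ (fun x => a (Sum.inl x)) *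
              genPoly Bs₁ ∅ ∅ (fun x => a (Sum.inl x))) :=
          mul_le_mul_of_nonneg_right key (mul_nonneg h1 h1)
      _ = _ := by ring
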